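/- Let n ≥ 1. The symmetric canonical elements for the integer lattice 𝔍_Spin of Spin(2n+1) are precisely the elements ξ_I = Σ_{i∈I} H_i and ξ_I + 2H_j, where I ranges over subsets of {1,…,n} with Σ_{i∈I} i even and j ranges over the odd elements of {1,…,n}. -/

import Mathlib

/-- `H_i = E_1 + ⋯ + E_i` for `so(2n+1)` (1-based index `i`). -/
def Hspin (n i : ℕ) : Fin n → ℝ := fun j => if (j : ℕ) + 1 ≤ i then 1 else 0

/-- The integer lattice of `Spin(2n+1)`: integer vectors with even coordinate sum. -/
def JSpin (n : ℕ) : Set (Fin n → ℝ) :=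
  {v | ∃ a : Fin n → ℤ, (∀ j, v j = a j) ∧ Even (∑ j, a j)}

/-- The set of symmetric canonical elements for a lattice `𝔏 ⊆ ℝ^n`:
elements `ξ = Σ_{i=1}^n n_i H_i` with nonnegative integer `n_i`, `ξ ∈ 𝔏`, such that
there is no `ξ' = Σ n'_i H_i ∈ 𝔏` with `n'_i ≤ n_i`, `ξ' ≠ ξ` and `ξ - ξ' ∈ 2𝔏`. -/
def SymCanonSet (n : ℕ) (𝔏 : Set (Fin n → ℝ)) (H : ℕ → Fin n → ℝ) :
    Set (Fin n → ℝ) :=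
  {ξ | ∃ c : ℕ → ℕ, ξ = ∑ i ∈ Finset.Icc 1 n, c i • H i ∧ ξ ∈ 𝔏 ∧
    ∀ c' : ℕ → ℕ, (∀ i ∈ Finset.Icc 1 n, c' i ≤ c i) →
      (∑ i ∈ Finset.Icc 1 n, c' i • H i) ∈ 𝔏 →
      (ξ - ∑ i ∈ Finset.Icc 1 n, c' i • H i) ∈ (fun v => (2 : ℝ) • v) '' 𝔏 →
      (∑ i ∈ Finset.Icc 1 n, c' i • H i) = ξ}

lemma Hspin_zero (n : ℕ) : Hspin n 0 = 0 := by
  funext j; simp [Hspin]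

/-- Tail sum of coefficients. -/
def Stail (n : ℕ) (c : ℕ → ℕ) (k : ℕ) : ℕ := ∑ i ∈ Finset.Icc (k+1) n, c i

lemma Stail_of_ge (n : ℕ) (c : ℕ → ℕ) {k : ℕ} (hk : n ≤ k) : Stail n c k = 0 := by
  unfold Stail
  rw [Finset.Icc_eq_empty (by omega), Finset.sum_empty]

lemma Stail_succ (n : ℕ) (c : ℕ → ℕ) {i : ℕ} (h1 : 1 ≤ i) (h2 : i ≤ n) :
    Stail n c (i-1) = c i + Stail n c i := by
  unfold Stail
  have : i - 1 + 1 = i := by omega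
  rw [this, Finset.Icc_eq_cons_Ioc h2, Finset.sum_cons, ← Finset.Icc_add_one_left_eq_Ioc]

lemma coord (n : ℕ) (c : ℕ → ℕ) (j : Fin n) :
    (∑ i ∈ Finset.Icc 1 n, c i • Hspin n i) j = (Stail n c (j : ℕ) : ℝ) := by
  have hf : (Finset.Icc 1 n).filter (fun i => (j : ℕ) + 1 ≤ i) = Finset.Icc ((j:ℕ)+1) n := by
    ext k; simp only [Finset.mem_filter, Finset.mem_Icc]; omega
  rw [Finset.sum_apply]
  simp only [Pi.smul_apply, Hspin, smul_ite, smul_zero, nsmul_eq_mul, mul_one]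
  rw [Finset.sum_ite, Finset.sum_const_zero, add_zero, hf]
  push_cast [Stail]
  rfl

lemma coeff_inj (n : ℕ) (c c' : ℕ → ℕ)
    (h : (∑ i ∈ Finset.Icc 1 n, c i • Hspin n i) = ∑ i ∈ Finset.Icc 1 n, c' i • Hspin n i) :
    ∀ i ∈ Finset.Icc 1 n, c i = c' i := by
  have hS : ∀ k, Stail n c k = Stail n c' k := by
    intro k
    by_cases hk : k < n
    · have := congrFun h ⟨k, hk⟩
      rw [coord, coord] at this
      exact_mod_cast this
    · rw [Stail_of_ge _ _ (by omega), Stail_of_ge _ _ (by omega)]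
  intro i hi
  rw [Finset.mem_Icc] at hi
  have h1 := Stail_succ n c hi.1 hi.2
  have h2 := Stail_succ n c' hi.1 hi.2
  have := hS (i-1); have := hS i
  omega

lemma sum_Stail (n : ℕ) (c : ℕ → ℕ) :
    ∑ j : Fin n, Stail n c (j : ℕ) = ∑ i ∈ Finset.Icc 1 n, c i * i := by
  have h1 : ∀ j : ℕ, Stail n c j = ∑ i ∈ Finset.Icc 1 n, if j + 1 ≤ i then c i else 0 := by
    intro j
    rw [Finset.sum_ite, Finset.sum_const_zero, add_zero]
    have hf : (Finset.Icc 1 n).filter (fun i => j + 1 ≤ i) = Finset.Icc (j+1) n := by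
      ext k; simp only [Finset.mem_filter, Finset.mem_Icc]; omega
    rw [hf]; rfl
  rw [Fin.sum_univ_eq_sum_range (fun j => Stail n c j)]
  simp only [h1]
  rw [Finset.sum_comm]
  refine Finset.sum_congr rfl ?_
  intro i hi
  rw [Finset.mem_Icc] at hi
  rw [← Finset.sum_filter]
  have hf : (Finset.range n).filter (fun j => j + 1 ≤ i) = Finset.range i := by
    ext k; simp only [Finset.mem_filter, Finset.mem_range]; omega
  rw [hf, Finset.sum_const, Finset.card_range, smul_eq_mul, mul_comm]

lemma mem_JSpin_iff (n : ℕ) (c : ℕ → ℕ) :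
    (∑ i ∈ Finset.Icc 1 n, c i • Hspin n i) ∈ JSpin n ↔
      Even (∑ i ∈ Finset.Icc 1 n, c i * i) := by
  constructor
  · rintro ⟨a, ha, hev⟩
    have hco : ∀ j : Fin n, a j = (Stail n c (j : ℕ) : ℤ) := by
      intro j
      have := (ha j).symm.trans (coord n c j)
      exact_mod_cast this
    have : (∑ j, a j) = ((∑ i ∈ Finset.Icc 1 n, c i * i : ℕ) : ℤ) := by
      rw [← sum_Stail n c]
      push_cast
      exact Finset.sum_congr rfl (fun j _ => hco j)
    rw [this] at hev
    exact_mod_cast hev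
  · intro hev
    refine ⟨fun j => (Stail n c (j : ℕ) : ℤ), fun j => by rw [coord]; push_cast; ring, ?_⟩
    have : (∑ j : Fin n, ((Stail n c (j : ℕ) : ℤ))) = ((∑ i ∈ Finset.Icc 1 n, c i * i : ℕ) : ℤ) := by
      rw [← sum_Stail n c]; push_cast; ring
    rw [this]
    exact_mod_cast hev

lemma sub_sum (n : ℕ) (c c' : ℕ → ℕ) (hle : ∀ i ∈ Finset.Icc 1 n, c' i ≤ c i) :
    (∑ i ∈ Finset.Icc 1 n, c i • Hspin n i) - (∑ i ∈ Finset.Icc 1 n, c' i • Hspin n i)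
      = ∑ i ∈ Finset.Icc 1 n, (c i - c' i) • Hspin n i := by
  rw [← Finset.sum_sub_distrib]
  refine Finset.sum_congr rfl (fun i hi => ?_)
  have h : (c i - c' i) + c' i = c i := Nat.sub_add_cancel (hle i hi)
  calc c i • Hspin n i - c' i • Hspin n i
      = ((c i - c' i) + c' i) • Hspin n i - c' i • Hspin n i := by rw [h]
    _ = (c i - c' i) • Hspin n i := by rw [add_smul]; abel

lemma two_JSpin_iff (n : ℕ) (e : ℕ → ℕ) :
    (∑ i ∈ Finset.Icc 1 n, e i • Hspin n i) ∈ (fun v => (2 : ℝ) • v) '' JSpin n ↔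
      ∃ d : ℕ → ℕ, (∀ i ∈ Finset.Icc 1 n, e i = 2 * d i) ∧
        Even (∑ i ∈ Finset.Icc 1 n, d i * i) := by
  constructor
  · rintro ⟨v, ⟨a, ha, hev⟩, hv⟩
    have hco : ∀ j : Fin n, 2 * a j = (Stail n e (j : ℕ) : ℤ) := by
      intro j
      have h2 := congrFun hv j
      rw [coord n e j] at h2
      have h1 : (2 : ℝ) * (a j : ℝ) = (Stail n e (j : ℕ) : ℝ) := by
        rw [← ha j]
        simpa using h2
      exact_mod_cast h1
    have hSev : ∀ k, Even (Stail n e k) := by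
      intro k
      by_cases hk : k < n
      · have h : 2 * a ⟨k, hk⟩ = (Stail n e k : ℤ) := by simpa using hco ⟨k, hk⟩
        have h2 : Even ((Stail n e k : ℤ)) := ⟨a ⟨k, hk⟩, by omega⟩
        exact_mod_cast h2
      · rw [Stail_of_ge n e (by omega)]; exact Even.zero
    have hEe : ∀ i ∈ Finset.Icc 1 n, Even (e i) := by
      intro i hi
      rw [Finset.mem_Icc] at hi
      have h1 := Stail_succ n e hi.1 hi.2
      have h2 := hSev (i - 1)
      have h3 := hSev i
      rw [Nat.even_iff] at *
      omega
    refine ⟨fun i => e i / 2, fun i hi => by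
      have h := hEe i hi; rw [Nat.even_iff] at h
      show e i = 2 * (e i / 2); omega, ?_⟩
    have hsum : 2 * (∑ i ∈ Finset.Icc 1 n, (e i / 2) * i) = ∑ i ∈ Finset.Icc 1 n, e i * i := by
      rw [Finset.mul_sum]
      refine Finset.sum_congr rfl (fun i hi => ?_)
      obtain ⟨t, ht⟩ := hEe i hi
      have h2 : e i / 2 = t := by omega
      rw [h2, ht]; ring
    obtain ⟨m, hm⟩ := hev
    have hz : ((∑ i ∈ Finset.Icc 1 n, e i * i : ℕ) : ℤ) = 2 * (m + m) := by
      rw [← sum_Stail n e]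
      push_cast
      rw [show (∑ x : Fin n, ((Stail n e (x : ℕ) : ℤ))) = ∑ x : Fin n, 2 * a x from
        Finset.sum_congr rfl (fun j _ => (hco j).symm), ← Finset.mul_sum, hm]
    have : Even ((∑ i ∈ Finset.Icc 1 n, (e i / 2) * i : ℕ) : ℤ) := ⟨m, by omega⟩
    exact_mod_cast this
  · rintro ⟨d, hd, hev⟩
    refine ⟨∑ i ∈ Finset.Icc 1 n, d i • Hspin n i, (mem_JSpin_iff n d).2 hev, ?_⟩
    show (2 : ℝ) • (∑ i ∈ Finset.Icc 1 n, d i • Hspin n i) = _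
    rw [Finset.smul_sum]
    refine Finset.sum_congr rfl (fun i hi => ?_)
    rw [hd i hi, ← Nat.cast_smul_eq_nsmul ℝ (2 * d i), ← Nat.cast_smul_eq_nsmul ℝ (d i),
      smul_smul]
    norm_cast

lemma sum_rep (n : ℕ) (I : Finset ℕ) (hI : I ⊆ Finset.Icc 1 n) (j : ℕ)
    (hj : j = 0 ∨ j ∈ Finset.Icc 1 n) :
    ∑ i ∈ Finset.Icc 1 n, ((if i ∈ I then 1 else 0) + (if i = j then 2 else 0)) • Hspin n i
      = (∑ i ∈ I, Hspin n i) + (2 : ℕ) • Hspin n j := by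
  simp only [add_smul]
  rw [Finset.sum_add_distrib]
  congr 1
  · simp only [ite_smul, one_smul, zero_smul]
    rw [Finset.sum_ite_mem, Finset.inter_eq_right.mpr hI]
  · simp only [ite_smul, zero_smul]
    rw [Finset.sum_ite_eq' (Finset.Icc 1 n) j (fun i => (2 : ℕ) • Hspin n i)]
    rcases hj with rfl | hj
    · rw [if_neg (by simp), Hspin_zero, smul_zero]
    · rw [if_pos hj]

lemma sum_mul_rep (n : ℕ) (I : Finset ℕ) (hI : I ⊆ Finset.Icc 1 n) (j : ℕ)
    (hj : j = 0 ∨ j ∈ Finset.Icc 1 n) :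
    ∑ i ∈ Finset.Icc 1 n, ((if i ∈ I then 1 else 0) + (if i = j then 2 else 0)) * i
      = (∑ i ∈ I, i) + 2 * j := by
  simp only [add_mul, ite_mul, one_mul, zero_mul]
  rw [Finset.sum_add_distrib, Finset.sum_ite_mem, Finset.inter_eq_right.mpr hI,
    Finset.sum_ite_eq' (Finset.Icc 1 n) j (fun i => 2 * i)]
  rcases hj with rfl | hj
  · simp
  · rw [if_pos hj]

lemma canonical_of (n : ℕ) (I : Finset ℕ) (hI : I ⊆ Finset.Icc 1 n)
    (hIe : Even (∑ i ∈ I, i)) (j : ℕ)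
    (hj : j = 0 ∨ (j ∈ Finset.Icc 1 n ∧ Odd j)) :
    ((∑ i ∈ I, Hspin n i) + (2 : ℕ) • Hspin n j) ∈ SymCanonSet n (JSpin n) (Hspin n) := by
  obtain ⟨c, hcdef⟩ : ∃ c : ℕ → ℕ,
      ∀ i, c i = (if i ∈ I then 1 else 0) + (if i = j then 2 else 0) := ⟨_, fun _ => rfl⟩
  have hj' : j = 0 ∨ j ∈ Finset.Icc 1 n := hj.imp id And.left
  have hrep : ∑ i ∈ Finset.Icc 1 n, c i • Hspin n i
      = (∑ i ∈ I, Hspin n i) + (2 : ℕ) • Hspin n j :=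
    (Finset.sum_congr rfl fun i _ => by rw [hcdef i]).trans (sum_rep n I hI j hj')
  have hmul : ∑ i ∈ Finset.Icc 1 n, c i * i = (∑ i ∈ I, i) + 2 * j :=
    (Finset.sum_congr rfl fun i _ => by rw [hcdef i]).trans (sum_mul_rep n I hI j hj')
  have hble : ∀ i, c i ≤ 3 := fun i => by rw [hcdef i]; split_ifs <;> omega
  have hble1 : ∀ i, i ≠ j → c i ≤ 1 := fun i hij => by
    rw [hcdef i, if_neg hij, add_zero]; split_ifs <;> omega
  refine ⟨c, hrep.symm, ?_, ?_⟩
  · rw [← hrep]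
    rw [mem_JSpin_iff]
    rw [show (∑ i ∈ Finset.Icc 1 n, c i * i) = (∑ i ∈ I, i) + 2 * j from hmul]
    exact hIe.add ⟨j, by ring⟩
  · intro c' hle hmem' hsub
    rw [← hrep, sub_sum n c c' hle] at hsub
    obtain ⟨d, hd, hdev⟩ := (two_JSpin_iff n _).1 hsub
    have hceq : ∀ i ∈ Finset.Icc 1 n, c' i = c i := by
      have hd0 : ∀ i ∈ Finset.Icc 1 n, i ≠ j → d i = 0 := by
        intro i hi hij
        have h1 := hd i hi
        have h2 := hle i hi
        have h3 : c i ≤ 1 := hble1 i hij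
        omega
      rcases hj with rfl | ⟨hjm, hjodd⟩
      · intro i hi
        have h0 : d i = 0 := hd0 i hi (by simp at hi; omega)
        have h1 := hd i hi
        have h2 := hle i hi
        omega
      · have hsum : ∑ i ∈ Finset.Icc 1 n, d i * i = d j * j := by
          refine Finset.sum_eq_single j (fun i hi hij => by rw [hd0 i hi hij, zero_mul])
            (fun h => absurd hjm h)
        rw [hsum] at hdev
        have hdj : d j = 0 := by
          have h1 := hd j hjm
          have h2 := hle j hjm
          have h3 : c j ≤ 3 := hble j
          have h4 : d j ≤ 1 := by omega
          rcases Nat.even_mul.1 hdev with he | he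
          · obtain ⟨t, ht⟩ := he; omega
          · exact absurd he (Nat.not_even_iff_odd.2 hjodd)
        intro i hi
        by_cases hij : i = j
        · subst hij
          have h1 := hd i hi
          have h2 := hle i hi
          omega
        · have h0 := hd0 i hi hij
          have h1 := hd i hi
          have h2 := hle i hi
          omega
    exact (Finset.sum_congr rfl (fun i hi => by rw [hceq i hi])).trans hrep

/-- The symmetric canonical elements of `Spin(2n+1)` are precisely
the `ξ_I = Σ_{i∈I} H_i` and `ξ_I + 2H_j`, for `I ⊆ {1,…,n}` with `Σ_{i∈I} i` even
and `j ∈ {1,…,n}` odd. -/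
theorem spin_odd_symmetric_canonical (n : ℕ) (hn : 1 ≤ n) :
    SymCanonSet n (JSpin n) (Hspin n) =
      {ξ | ∃ I : Finset ℕ, I ⊆ Finset.Icc 1 n ∧ Even (∑ i ∈ I, i) ∧
        (ξ = ∑ i ∈ I, Hspin n i ∨
          ∃ j ∈ Finset.Icc 1 n, Odd j ∧
            ξ = (∑ i ∈ I, Hspin n i) + (2 : ℕ) • Hspin n j)} := by
  ext ξ
  simp only [Set.mem_setOf_eq]
  constructor
  · rintro ⟨c, hξ, hmem, hmax⟩
    have hcev : Even (∑ i ∈ Finset.Icc 1 n, c i * i) :=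
      (mem_JSpin_iff n c).1 (hξ ▸ hmem)
    -- key reduction principle
    have key : ∀ d : ℕ → ℕ, (∀ i ∈ Finset.Icc 1 n, 2 * d i ≤ c i) →
        Even (∑ i ∈ Finset.Icc 1 n, d i * i) → ∀ i ∈ Finset.Icc 1 n, d i = 0 := by
      intro d h2d hdev
      obtain ⟨c', hc'⟩ : ∃ c' : ℕ → ℕ, ∀ i, c' i = c i - 2 * d i := ⟨_, fun _ => rfl⟩
      have hle : ∀ i ∈ Finset.Icc 1 n, c' i ≤ c i := fun i _ => by
        rw [hc' i]; omega
      have hsum : ∑ i ∈ Finset.Icc 1 n, c i * i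
          = (∑ i ∈ Finset.Icc 1 n, c' i * i) + 2 * ∑ i ∈ Finset.Icc 1 n, d i * i := by
        rw [Finset.mul_sum, ← Finset.sum_add_distrib]
        refine Finset.sum_congr rfl fun i hi => ?_
        have hb : 2 * (d i * i) ≤ c i * i := by
          rw [← mul_assoc]; exact Nat.mul_le_mul_right _ (h2d i hi)
        rw [hc' i, Nat.sub_mul, mul_assoc]
        omega
      have hmem' : (∑ i ∈ Finset.Icc 1 n, c' i • Hspin n i) ∈ JSpin n := by
        rw [mem_JSpin_iff]
        rw [Nat.even_iff] at hcev ⊢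
        omega
      have hdiff : ∀ i ∈ Finset.Icc 1 n, c i - c' i = 2 * d i := fun i hi => by
        have := h2d i hi; rw [hc' i]; omega
      have hsub : ξ - (∑ i ∈ Finset.Icc 1 n, c' i • Hspin n i)
          ∈ (fun v => (2 : ℝ) • v) '' JSpin n := by
        rw [hξ, sub_sum n c c' hle]
        refine (two_JSpin_iff n _).2 ⟨d, hdiff, hdev⟩
      have heq := hmax c' hle hmem' hsub
      rw [hξ] at heq
      have heq' := coeff_inj n c' c heq
      intro i hi
      have h1 := heq' i hi
      have h2 := h2d i hi
      rw [hc' i] at h1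
      omega
    -- structural constraints on c
    have hle1 : ∀ i ∈ Finset.Icc 1 n, Even i → c i ≤ 1 := by
      intro i hi hiev
      by_contra hgt
      push_neg at hgt
      have hd := key (fun k => if k = i then 1 else 0)
        (fun k hk => by split_ifs with h <;> [(subst h; omega); omega])
        (by
          simp only [ite_mul, one_mul, zero_mul]
          rw [Finset.sum_ite_eq' (Finset.Icc 1 n) i (fun k => k), if_pos hi]
          exact hiev) i hi
      simp at hd
    have hle3 : ∀ i ∈ Finset.Icc 1 n, c i ≤ 3 := by
      intro i hi
      by_contra hgt
      push_neg at hgt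
      have hd := key (fun k => if k = i then 2 else 0)
        (fun k hk => by split_ifs with h <;> [(subst h; omega); omega])
        (by
          simp only [ite_mul, zero_mul]
          rw [Finset.sum_ite_eq' (Finset.Icc 1 n) i (fun k => 2 * k), if_pos hi]
          exact ⟨i, by ring⟩) i hi
      simp at hd
    have huniq : ∀ i ∈ Finset.Icc 1 n, ∀ k ∈ Finset.Icc 1 n, i ≠ k →
        2 ≤ c i → 2 ≤ c k → False := by
      intro i hi k hk hik h2i h2k
      have hoi : Odd i := by
        rw [← Nat.not_even_iff_odd]; intro h; have := hle1 i hi h; omega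
      have hok : Odd k := by
        rw [← Nat.not_even_iff_odd]; intro h; have := hle1 k hk h; omega
      have hd := key (fun m => (if m = i then 1 else 0) + (if m = k then 1 else 0))
        (fun m hm => by
          by_cases h1 : m = i
          · subst h1; rw [if_pos rfl, if_neg hik]; omega
          · rw [if_neg h1]
            by_cases h2 : m = k
            · subst h2; rw [if_pos rfl]; omega
            · rw [if_neg h2]; omega)
        (by
          simp only [add_mul, ite_mul, one_mul, zero_mul, Finset.sum_add_distrib]
          rw [Finset.sum_ite_eq' (Finset.Icc 1 n) i (fun m => m), if_pos hi,
            Finset.sum_ite_eq' (Finset.Icc 1 n) k (fun m => m), if_pos hk]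
          exact hoi.add_odd hok) i hi
      rw [if_pos rfl, if_neg hik] at hd
      omega
    -- build I
    obtain ⟨I, hIdef⟩ : ∃ I : Finset ℕ, I = (Finset.Icc 1 n).filter (fun i => Odd (c i)) :=
      ⟨_, rfl⟩
    have hIsub : I ⊆ Finset.Icc 1 n := hIdef ▸ Finset.filter_subset _ _
    have hImem : ∀ i, i ∈ I ↔ (i ∈ Finset.Icc 1 n ∧ Odd (c i)) := by
      intro i; rw [hIdef, Finset.mem_filter]
    by_cases hbig : ∃ j ∈ Finset.Icc 1 n, 2 ≤ c j
    · obtain ⟨j, hjm, hj2⟩ := hbig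
      have hjodd : Odd j := by
        rw [← Nat.not_even_iff_odd]; intro h; have := hle1 j hjm h; omega
      have hform : ∀ i ∈ Finset.Icc 1 n,
          c i = (if i ∈ I then 1 else 0) + (if i = j then 2 else 0) := by
        intro i hi
        by_cases hij : i = j
        · subst hij
          rw [if_pos rfl]
          have h3 := hle3 i hi
          by_cases hiI : i ∈ I
          · rw [if_pos hiI]
            have ho := ((hImem i).1 hiI).2
            rw [Nat.odd_iff] at ho; omega
          · rw [if_neg hiI]
            have ho : ¬ Odd (c i) := fun h => hiI ((hImem i).2 ⟨hi, h⟩)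
            rw [Nat.odd_iff] at ho; omega
        · rw [if_neg hij, add_zero]
          have h1 : c i ≤ 1 := by
            by_contra h; push_neg at h
            exact huniq i hi j hjm hij (by omega) hj2
          by_cases hiI : i ∈ I
          · rw [if_pos hiI]
            have ho := ((hImem i).1 hiI).2
            rw [Nat.odd_iff] at ho; omega
          · rw [if_neg hiI]
            have ho : ¬ Odd (c i) := fun h => hiI ((hImem i).2 ⟨hi, h⟩)
            rw [Nat.odd_iff] at ho; omega
      have hmul : ∑ i ∈ Finset.Icc 1 n, c i * i = (∑ i ∈ I, i) + 2 * j :=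
        (Finset.sum_congr rfl fun i hi => by rw [hform i hi]).trans
          (sum_mul_rep n I hIsub j (Or.inr hjm))
      refine ⟨I, hIsub, ?_, Or.inr ⟨j, hjm, hjodd, ?_⟩⟩
      · rw [hmul, Nat.even_iff] at hcev
        rw [Nat.even_iff]; omega
      · rw [hξ]
        exact (Finset.sum_congr rfl fun i hi => by rw [hform i hi]).trans
          (sum_rep n I hIsub j (Or.inr hjm))
    · push_neg at hbig
      have hform : ∀ i ∈ Finset.Icc 1 n,
          c i = (if i ∈ I then 1 else 0) + (if i = 0 then 2 else 0) := by
        intro i hi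
        have hi0 : i ≠ 0 := by simp only [Finset.mem_Icc] at hi; omega
        rw [if_neg hi0, add_zero]
        have h1 : c i ≤ 1 := by have := hbig i hi; omega
        by_cases hiI : i ∈ I
        · rw [if_pos hiI]
          have ho := ((hImem i).1 hiI).2
          rw [Nat.odd_iff] at ho; omega
        · rw [if_neg hiI]
          have ho : ¬ Odd (c i) := fun h => hiI ((hImem i).2 ⟨hi, h⟩)
          rw [Nat.odd_iff] at ho; omega
      have hmul : ∑ i ∈ Finset.Icc 1 n, c i * i = (∑ i ∈ I, i) + 2 * 0 :=
        (Finset.sum_congr rfl fun i hi => by rw [hform i hi]).trans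
          (sum_mul_rep n I hIsub 0 (Or.inl rfl))
      refine ⟨I, hIsub, ?_, Or.inl ?_⟩
      · rw [hmul, Nat.even_iff] at hcev
        rw [Nat.even_iff]; omega
      · rw [hξ]
        refine ((Finset.sum_congr rfl fun i hi => by rw [hform i hi]).trans
          ((sum_rep n I hIsub 0 (Or.inl rfl)).trans ?_))
        rw [Hspin_zero, smul_zero, add_zero]
  · rintro ⟨I, hI, hIe, hξ | ⟨j, hjm, hjodd, hξ⟩⟩
    · have h := canonical_of n I hI hIe 0 (Or.inl rfl)
      rw [Hspin_zero, smul_zero, add_zero] at h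
      rw [hξ]; exact h
    · rw [hξ]; exact canonical_of n I hI hIe j (Or.inr ⟨hjm, hjodd⟩)
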